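/- arXiv:0906.5200 — 2 statements merged into one kernel-verified Lean document; each statement's English description precedes it below -/
import Mathlib

section
/- Let Q(y,x) ∈ (ℚ[y])⟦x⟧ be the Hirzebruch power series. For every natural number n, the coefficient of x^n in the power series Q(y,x)^{n+1} ∈ (ℚ[y])⟦x⟧ equals Σ_{i=0}^{n} (−y)^i = 1 − y + y² − ⋯ + (−y)^n in ℚ[y]. (Since the total Chern class of the tangent bundle of ℂP^n is (1+h)^{n+1}, this coefficient is the degree of the 0-dimensional component of the Hirzebruch class td_{(y)}(TℂP^n) ∩ [ℂP^n], i.e. the χ_y-genus of ℂP^n; this is the normalization condition used to identify the Hirzebruch class.) -/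
open PowerSeries

/-- The formal power series `(1 - e^{-t})/t = Σ_{n≥0} (-1)^n t^n/(n+1)!` in `ℚ⟦t⟧`. -/
noncomputable def toddDenominator : PowerSeries ℚ :=
  PowerSeries.mk fun n => (-1) ^ n / (Nat.factorial (n + 1) : ℚ)

/-- The Todd power series `T(t) = ((1 - e^{-t})/t)⁻¹ ∈ ℚ⟦t⟧`. -/
noncomputable def toddSeries : PowerSeries ℚ := toddDenominator⁻¹

/-- The Hirzebruch power series `Q(y,x) = T(x(1+y)) - xy ∈ (ℚ[y])⟦x⟧`, where the
coefficient of `x^n` in `T(x(1+y))` is `(1+y)^n` times the coefficient of `t^n` in `T(t)`. -/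
noncomputable def hirzebruchSeries : PowerSeries (Polynomial ℚ) :=
  (PowerSeries.mk fun n =>
      (1 + Polynomial.X : Polynomial ℚ) ^ n * Polynomial.C (PowerSeries.coeff (R := ℚ) n toddSeries))
    - PowerSeries.X * PowerSeries.C (R := Polynomial ℚ) Polynomial.X

namespace HirzAux

abbrev Rq := Polynomial ℚ

noncomputable def Yp : PowerSeries Rq := PowerSeries.C (R := Rq) Polynomial.X

noncomputable def Tq : PowerSeries Rq :=
  rescale (1 + Polynomial.X) (PowerSeries.map Polynomial.C toddSeries)

noncomputable def Dq : PowerSeries Rq :=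
  rescale (1 + Polynomial.X) (PowerSeries.map Polynomial.C toddDenominator)

noncomputable def useries : PowerSeries Rq :=
  PowerSeries.mk fun n =>
    Polynomial.C ((-1) ^ n / (Nat.factorial n : ℚ)) * (1 + Polynomial.X) ^ n

lemma constCoeff_toddDen : constantCoeff (R := ℚ) toddDenominator = 1 := by
  rw [← coeff_zero_eq_constantCoeff]
  simp [toddDenominator]

lemma todd_mul : toddDenominator * toddSeries = 1 := by
  rw [toddSeries, PowerSeries.mul_inv_cancel]
  rw [constCoeff_toddDen]; norm_num

lemma hTD : Dq * Tq = 1 := by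
  rw [Dq, Tq, ← map_mul, ← map_mul, todd_mul, map_one, map_one]

lemma hH : hirzebruchSeries = Tq - PowerSeries.X * Yp := by
  ext n
  simp [hirzebruchSeries, Tq, Yp, coeff_rescale, coeff_map]

lemma constCoeff_todd : constantCoeff (R := ℚ) toddSeries = 1 := by
  rw [toddSeries, PowerSeries.constantCoeff_inv, constCoeff_toddDen]; norm_num

lemma hQ0 : constantCoeff (R := Rq) hirzebruchSeries = 1 := by
  rw [← coeff_zero_eq_constantCoeff, hH]
  simp only [map_sub, Tq, coeff_rescale, coeff_map, pow_zero, one_mul,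
    coeff_zero_eq_constantCoeff, constCoeff_todd, map_one, map_mul, constantCoeff_X,
    zero_mul, sub_zero]

end HirzAux
namespace HirzAux

noncomputable def Qs : PowerSeries Rq := hirzebruchSeries

noncomputable def vs : PowerSeries Rq := invOfUnit Qs 1

lemma hQv : Qs * vs = 1 := by
  apply mul_invOfUnit
  rw [Qs, hQ0]; rfl

noncomputable def w : PowerSeries Rq := PowerSeries.X * vs

lemma hwQ : w * Qs = PowerSeries.X := by
  rw [w, mul_assoc, mul_comm vs Qs, hQv, mul_one]

lemma hDu : PowerSeries.X * ((1 + Yp) * Dq) = 1 - useries := by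
  have hY : (1 : PowerSeries Rq) + Yp = PowerSeries.C (R := Rq) (1 + Polynomial.X) := by
    rw [Yp, map_add, map_one]
  rw [hY]
  ext n
  rcases n with _ | n
  · simp [useries]
  · rw [coeff_succ_X_mul]
    simp only [map_sub, coeff_C_mul, Dq, coeff_rescale, coeff_map, useries, coeff_mk,
      toddDenominator, coeff_one]
    have : ((-1 : ℚ)) ^ (n + 1) = -(-1) ^ n := by ring
    rw [this]
    simp only [Nat.succ_ne_zero, if_false, neg_div, map_neg, zero_sub]
    ring_nf

end HirzAux
namespace HirzAux

lemma hu' : derivative Rq useries = -((1 + Yp) * useries) := by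
  have hY : (1 : PowerSeries Rq) + Yp = PowerSeries.C (R := Rq) (1 + Polynomial.X) := by
    rw [Yp, map_add, map_one]
  rw [hY]
  ext n : 1
  rw [PowerSeries.coeff_derivative]
  simp only [map_neg, coeff_C_mul, useries, coeff_mk]
  have h3 : ((n : Rq) + 1) = Polynomial.C ((n : ℚ) + 1) := by
    rw [map_add, map_one, map_natCast]
  have key : ((-1 : ℚ)) ^ (n + 1) / (Nat.factorial (n + 1) : ℚ) * ((n : ℚ) + 1)
      = -((-1) ^ n / (Nat.factorial n : ℚ)) := by
    have hnf : (Nat.factorial n : ℚ) ≠ 0 := Nat.cast_ne_zero.mpr n.factorial_ne_zero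
    have hn1 : ((n : ℚ) + 1) ≠ 0 := by positivity
    rw [Nat.factorial_succ]; push_cast; field_simp; ring
  rw [h3, mul_right_comm, ← map_mul, key, map_neg]
  ring

end HirzAux
namespace HirzAux

lemma hQne : (Qs : PowerSeries Rq) ≠ 0 := by
  intro h
  have := hQ0
  rw [← Qs, h, map_zero] at this
  exact one_ne_zero this.symm

lemma hQu : Qs * (1 - useries) = PowerSeries.X * (1 + Yp * useries) := by
  have h : Qs = Tq - PowerSeries.X * Yp := hH
  rw [h]
  linear_combination (-Tq) * hDu + (PowerSeries.X * (1 + Yp)) * hTD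

lemma hwu : w * (1 + Yp * useries) = 1 - useries := by
  apply mul_left_cancel₀ hQne
  calc Qs * (w * (1 + Yp * useries)) = (w * Qs) * (1 + Yp * useries) := by ring
  _ = PowerSeries.X * (1 + Yp * useries) := by rw [hwQ]
  _ = Qs * (1 - useries) := hQu.symm

lemma hYune : (1 + Yp * useries : PowerSeries Rq) ≠ 0 := by
  intro h
  have h0 : constantCoeff (R := Rq) (1 + Yp * useries) = 0 := by rw [h, map_zero]
  rw [map_add, map_one, map_mul] at h0
  have hu0 : constantCoeff (R := Rq) useries = 1 := by
    rw [← coeff_zero_eq_constantCoeff]; simp [useries]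
  have hY0 : constantCoeff (R := Rq) Yp = Polynomial.X := by rw [Yp]; simp
  rw [hu0, hY0, mul_one] at h0
  have := congrArg (Polynomial.coeff · 1) h0
  simp [Polynomial.coeff_one] at this

lemma deriv_mul (f g : PowerSeries Rq) :
    derivative Rq (f * g) = f * derivative Rq g + g * derivative Rq f := by
  have h : derivative Rq (f * g) = PowerSeries.derivativeFun (f * g) := rfl
  rw [h, PowerSeries.derivativeFun_mul, smul_eq_mul, smul_eq_mul]
  rfl

lemma hw' : derivative Rq w = (1 - w) * (1 + Yp * w) := by
  apply mul_right_cancel₀ hYune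
  have hdYu : derivative Rq (1 + Yp * useries) = Yp * derivative Rq useries := by
    have hone : derivative Rq (1 : PowerSeries Rq) = 0 := by
      rw [← map_one (PowerSeries.C (R := Rq)), PowerSeries.derivative_C]
    rw [map_add, hone, deriv_mul]
    have hcy : derivative Rq Yp = 0 := by rw [Yp]; exact PowerSeries.derivative_C
    rw [hcy]; ring
  have hd := congrArg (derivative Rq) hwu
  have hone : derivative Rq (1 : PowerSeries Rq) = 0 := by
    rw [← map_one (PowerSeries.C (R := Rq)), PowerSeries.derivative_C]
  rw [map_sub, hone, zero_sub, deriv_mul, hdYu, hu'] at hd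
  -- hd : w * (Yp * -((1+Yp)*useries)) + (1+Yp*useries) * derivative w = -(-((1+Yp)*useries))
  have goal2 : derivative Rq w * (1 + Yp * useries)
      = (1 + Yp) * useries * (1 + Yp * w) := by linear_combination hd
  rw [goal2]
  linear_combination ((1:PowerSeries Rq) + Yp * w) * hwu

end HirzAux
namespace HirzAux

lemma deriv_pow (f : PowerSeries Rq) : ∀ k : ℕ,
    derivative Rq (f ^ (k + 1)) = ((k : PowerSeries Rq) + 1) * (f ^ k * derivative Rq f)
  | 0 => by simp
  | (k + 1) => by
    have h : f ^ (k + 2) = f ^ (k + 1) * f := by ring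
    rw [h, deriv_mul, deriv_pow f k]
    push_cast
    ring

lemma h9 : derivative Rq w * Qs + w * derivative Rq Qs = 1 := by
  have h := congrArg (derivative Rq) hwQ
  rw [deriv_mul, PowerSeries.derivative_X] at h
  linear_combination h

lemma hw0 : constantCoeff (R := Rq) w = 0 := by
  rw [w, map_mul, constantCoeff_X, zero_mul]

lemma hB (m : ℕ) :
    PowerSeries.coeff (R := Rq) m (Qs ^ (m + 1) * derivative Rq w) = if m = 0 then 1 else 0 := by
  rcases m with _ | k
  · have hQs0 : constantCoeff (R := Rq) Qs = 1 := hQ0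
    rw [if_pos rfl, coeff_zero_eq_constantCoeff, map_mul, pow_one, hQs0, one_mul, hw',
      map_mul, map_sub, map_add, map_one, map_mul, hw0, mul_zero, add_zero, sub_zero, one_mul]
  · rw [if_neg (Nat.succ_ne_zero k)]
    have key : Qs ^ (k + 2) * derivative Rq w
        = Qs ^ (k + 1) - PowerSeries.X * (Qs ^ k * derivative Rq Qs) := by
      linear_combination (Qs ^ (k + 1)) * h9 - (Qs ^ k * derivative Rq Qs) * hwQ
    rw [key, map_sub, coeff_succ_X_mul]
    have hc : ((k : Rq) + 1) * PowerSeries.coeff (R := Rq) k (Qs ^ k * derivative Rq Qs)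
        = PowerSeries.coeff (R := Rq) (k + 1) (Qs ^ (k + 1)) * ((k : Rq) + 1) := by
      have h1 := PowerSeries.coeff_derivative (Qs ^ (k + 1)) k
      rw [deriv_pow Qs k] at h1
      have h2 : ((k : PowerSeries Rq) + 1) = PowerSeries.C (R := Rq) ((k : Rq) + 1) := by
        rw [map_add, map_one, map_natCast]
      rw [h2, coeff_C_mul] at h1
      exact h1
    have hne : ((k : Rq) + 1) ≠ 0 := by
      intro h
      have := congrArg (Polynomial.coeff · 0) h
      simp [Polynomial.coeff_natCast_ite] at this
      have := Nat.cast_add_one_ne_zero (R := ℚ) k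
      simp_all
    have := mul_left_cancel₀ hne (hc.trans (mul_comm _ _))
    rw [this]
    ring

lemma geom_aux {A : Type*} [CommRing A] (t y : A) : ∀ n : ℕ,
    (1 - t) * (1 + y * t)
        * (∑ i ∈ Finset.range (n + 1), (∑ j ∈ Finset.range (i + 1), (-y) ^ j) * t ^ i)
      = 1 - t ^ (n + 1) * (((-y) ^ (n + 1) + ∑ j ∈ Finset.range (n + 1), (-y) ^ j)
          + y * (∑ j ∈ Finset.range (n + 1), (-y) ^ j) * t)
  | 0 => by simp; ring
  | (n + 1) => by
    have ih := geom_aux t y n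
    rw [Finset.sum_range_succ
      (f := fun i => (∑ j ∈ Finset.range (i + 1), (-y) ^ j) * t ^ i)]
    rw [Finset.sum_range_succ (f := fun j => (-y) ^ j)]
    linear_combination ih

end HirzAux
namespace HirzAux

noncomputable def cpol (i : ℕ) : Rq := ∑ j ∈ Finset.range (i + 1), (-Polynomial.X) ^ j

lemma hconv (i : ℕ) :
    (∑ j ∈ Finset.range (i + 1), (-Yp) ^ j) = PowerSeries.C (R := Rq) (cpol i) := by
  rw [cpol, map_sum]
  refine Finset.sum_congr rfl fun j _ => ?_
  rw [map_pow, map_neg, Yp]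

lemma hQw (i : ℕ) (hi : i ≤ n + 1) : Qs ^ (n + 1) * w ^ i
    = PowerSeries.X ^ i * Qs ^ (n + 1 - i) := by
  have h1 : Qs ^ (n + 1) = Qs ^ (n + 1 - i) * Qs ^ i := by
    rw [← pow_add, Nat.sub_add_cancel hi]
  rw [h1, mul_assoc, ← mul_pow, mul_comm Qs w, hwQ]
  ring

lemma main (n : ℕ) : PowerSeries.coeff (R := Rq) n (Qs ^ (n + 1)) = cpol n := by
  have hgeo := geom_aux w Yp n
  set E : PowerSeries Rq :=
    ((-Yp) ^ (n + 1) + ∑ j ∈ Finset.range (n + 1), (-Yp) ^ j)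
      + Yp * (∑ j ∈ Finset.range (n + 1), (-Yp) ^ j) * w with hE
  have hgeo2 := congrArg (fun z => Qs ^ (n + 1) * z) hgeo
  simp only [mul_sub, mul_one, Finset.mul_sum] at hgeo2
  -- rewrite RHS second term
  have hXn : Qs ^ (n + 1) * (w ^ (n + 1) * E) = PowerSeries.X ^ (n + 1) * E := by
    rw [← mul_assoc, ← mul_pow, mul_comm Qs w, hwQ]
  have hterm : ∀ i ∈ Finset.range (n + 1),
      Qs ^ (n + 1) * ((1 - w) * (1 + Yp * w) * ((∑ j ∈ Finset.range (i + 1), (-Yp) ^ j) * w ^ i))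
        = PowerSeries.C (R := Rq) (cpol i)
            * (PowerSeries.X ^ i * (Qs ^ (n + 1 - i) * derivative Rq w)) := by
    intro i hi
    have hi' : i < n + 1 := Finset.mem_range.mp hi
    rw [hconv i, ← hw']
    have := hQw (n := n) i (by omega : i ≤ n + 1)
    calc Qs ^ (n + 1) * (derivative Rq w * (PowerSeries.C (R := Rq) (cpol i) * w ^ i))
        = PowerSeries.C (R := Rq) (cpol i) * ((Qs ^ (n + 1) * w ^ i) * derivative Rq w) := by ring
      _ = _ := by rw [this]; ring
  rw [Finset.sum_congr rfl hterm] at hgeo2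
  have hkey : (∑ i ∈ Finset.range (n + 1), PowerSeries.C (R := Rq) (cpol i)
        * (PowerSeries.X ^ i * (Qs ^ (n + 1 - i) * derivative Rq w)))
      = Qs ^ (n + 1) - PowerSeries.X ^ (n + 1) * E := by
    rw [← hXn]
    linear_combination hgeo2
  have hco := congrArg (PowerSeries.coeff (R := Rq) n) hkey
  rw [map_sub, map_sum] at hco
  have hXE : PowerSeries.coeff (R := Rq) n (PowerSeries.X ^ (n + 1) * E) = 0 := by
    rw [PowerSeries.coeff_X_pow_mul']
    simp
  rw [hXE, sub_zero] at hco
  rw [← hco]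
  have hterm2 : ∀ i ∈ Finset.range (n + 1),
      PowerSeries.coeff (R := Rq) n (PowerSeries.C (R := Rq) (cpol i)
        * (PowerSeries.X ^ i * (Qs ^ (n + 1 - i) * derivative Rq w)))
      = if i = n then cpol n else 0 := by
    intro i hi
    rw [Finset.mem_range] at hi
    rw [coeff_C_mul, PowerSeries.coeff_X_pow_mul', if_pos (by omega : i ≤ n)]
    have h1 : n - i + 1 = (n + 1 - i) := by omega
    have hb := hB (n - i)
    rw [h1] at hb
    rw [hb]
    rcases eq_or_ne i n with h | h
    · subst h; simp
    · have hni : ¬ (n - i = 0) := by omega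
      rw [if_neg hni, if_neg h, mul_zero]
  rw [Finset.sum_congr rfl hterm2, Finset.sum_ite_eq' (Finset.range (n + 1)) n (fun _ => cpol n)]
  rw [if_pos (Finset.self_mem_range_succ n)]

end HirzAux

/-- Normalization: for every `n`, the coefficient of `x^n` in `Q(y,x)^{n+1}` is
`1 - y + y² - ⋯ + (-y)^n`, the `χ_y`-genus of `ℂP^n`. -/
theorem coeff_hirzebruchSeries_pow (n : ℕ) :
    PowerSeries.coeff (R := Polynomial ℚ) n (hirzebruchSeries ^ (n + 1))
      = ∑ i ∈ Finset.range (n + 1), (-Polynomial.X : Polynomial ℚ) ^ i :=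
  HirzAux.main n
end

section
/- Let Q(y,x) ∈ (ℚ[y])⟦x⟧ be the Hirzebruch power series. If f ∈ (ℚ[y])⟦x⟧ is any formal power series whose constant coefficient is 1 and which satisfies, for every natural number n, that the coefficient of x^n in f^{n+1} equals Σ_{i=0}^{n} (−y)^i in ℚ[y], then f = Q(y,x). (This is the uniqueness statement by which a multiplicative characteristic class satisfying the normalization condition on projective spaces is identified as the Hirzebruch class td_{(y)}.) -/
open PowerSeries

abbrev Rq := Polynomial ℚ

noncomputable def Phi : PowerSeries ℚ →+* PowerSeries Rq :=
  (rescale (1 + Polynomial.X)).comp (PowerSeries.map (algebraMap ℚ Rq))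

lemma coeff_Phi (g : PowerSeries ℚ) (n : ℕ) :
    PowerSeries.coeff (R := Rq) n (Phi g)
      = (1 + Polynomial.X : Rq) ^ n * Polynomial.C (PowerSeries.coeff (R := ℚ) n g) := by
  simp [Phi, coeff_rescale, Polynomial.algebraMap_eq]

lemma cc_toddDenominator : constantCoeff (R := ℚ) toddDenominator = 1 := by
  simp [toddDenominator, ← coeff_zero_eq_constantCoeff_apply]

lemma todd_mul : toddSeries * toddDenominator = 1 := by
  rw [toddSeries]
  exact PowerSeries.inv_mul_cancel _ (by rw [cc_toddDenominator]; norm_num)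

lemma cc_toddSeries : constantCoeff (R := ℚ) toddSeries = 1 := by
  rw [toddSeries, constantCoeff_inv, cc_toddDenominator, inv_one]

lemma X_mul_toddDenominator :
    (X : PowerSeries ℚ) * toddDenominator = 1 - rescale (-1) (PowerSeries.exp ℚ) := by
  ext n
  cases n with
  | zero =>
      simp only [coeff_zero_eq_constantCoeff_apply, map_mul, map_sub, map_one,
        constantCoeff_X, zero_mul]
      rw [← coeff_zero_eq_constantCoeff_apply, coeff_rescale, coeff_zero_eq_constantCoeff_apply,
        constantCoeff_exp]
      norm_num
  | succ m =>
      rw [coeff_succ_X_mul]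
      simp [toddDenominator, coeff_rescale, coeff_exp, pow_succ, Nat.factorial_succ]
      rw [div_eq_mul_inv, mul_inv]
      ring

lemma hirzebruch_eq : hirzebruchSeries
  = (PowerSeries.mk fun n =>
      (1 + Polynomial.X : Polynomial ℚ) ^ n * Polynomial.C (PowerSeries.coeff (R := ℚ) n toddSeries))
    - PowerSeries.X * PowerSeries.C (R := Polynomial ℚ) Polynomial.X := rfl

noncomputable def Ee : PowerSeries Rq := Phi (rescale (-1) (PowerSeries.exp ℚ))

local notation "QQ" => hirzebruchSeries
local notation "Cy" => PowerSeries.C (R := Rq) Polynomial.X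
local notation "C1y" => PowerSeries.C (R := Rq) (1 + Polynomial.X)

lemma Phi_X : Phi (X : PowerSeries ℚ) = C1y * X := by
  ext n
  rw [coeff_Phi]
  cases n with
  | zero => simp
  | succ m =>
    rw [PowerSeries.coeff_C_mul, coeff_X]
    cases m with
    | zero => simp [coeff_succ_X_mul]
    | succ k => simp [PowerSeries.coeff_X]

lemma Q_def : QQ = Phi toddSeries - X * Cy := by
  have h : (PowerSeries.mk fun n => (1 + Polynomial.X : Rq)^n
      * Polynomial.C (PowerSeries.coeff (R := ℚ) n toddSeries)) = Phi toddSeries := by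
    ext n : 1
    rw [coeff_Phi, coeff_mk]
  rw [hirzebruch_eq, h]

lemma key1 : Phi toddSeries * (1 - Ee) = C1y * X := by
  have h := congrArg Phi X_mul_toddDenominator
  rw [map_mul, map_sub, map_one, Phi_X] at h
  have h2 : (1 - Ee) = C1y * X * Phi toddDenominator := by rw [Ee, ← h]
  rw [h2]
  have h3 : Phi toddSeries * (C1y * X * Phi toddDenominator)
      = Phi (toddSeries * toddDenominator) * (C1y * X) := by
    rw [map_mul]; ring
  rw [h3, todd_mul, map_one, one_mul]

lemma key2 : QQ * (1 - Ee) = X * (1 + Cy * Ee) := by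
  rw [Q_def, sub_mul, key1]
  have : C1y = 1 + Cy := by rw [map_add, map_one]
  rw [this]
  ring

lemma cc_Q : constantCoeff (R := Rq) QQ = 1 := by
  rw [hirzebruch_eq, map_sub, map_mul, constantCoeff_X, zero_mul, sub_zero,
    ← coeff_zero_eq_constantCoeff_apply, coeff_mk, pow_zero, one_mul,
    coeff_zero_eq_constantCoeff_apply, cc_toddSeries, map_one]

noncomputable def Qi : PowerSeries Rq := hirzebruchSeries.invOfUnit 1

lemma QQi : QQ * Qi = 1 := mul_invOfUnit _ _ (by rw [cc_Q, Units.val_one])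

noncomputable def ff : PowerSeries Rq := X * Qi

lemma ffstar : ff * (1 + Cy * Ee) = 1 - Ee := by
  have := congrArg (fun g => Qi * g) key2
  calc ff * (1 + Cy * Ee) = Qi * (X * (1 + Cy * Ee)) := by rw [ff]; ring
    _ = Qi * (QQ * (1 - Ee)) := by rw [key2]
    _ = (QQ * Qi) * (1 - Ee) := by ring
    _ = 1 - Ee := by rw [QQi, one_mul]

lemma coeff_Ee (n : ℕ) : PowerSeries.coeff (R := Rq) n Ee
    = (1 + Polynomial.X : Rq) ^ n * Polynomial.C ((-1 : ℚ) ^ n / n.factorial) := by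
  rw [Ee, coeff_Phi, coeff_rescale, coeff_exp]
  simp only [Algebra.algebraMap_self_apply, mul_one_div]


lemma dEe : d⁄dX Rq Ee = -(C1y * Ee) := by
  ext n : 1
  rw [PowerSeries.coeff_derivative, coeff_Ee, map_neg, PowerSeries.coeff_C_mul, coeff_Ee]
  have h1 : ((n : Rq) + 1) = Polynomial.C ((n : ℚ) + 1) := by
    rw [map_add, map_natCast, map_one]
  have key : Polynomial.C ((-1:ℚ)^(n+1)/(n+1).factorial) * ((n:Rq)+1)
      = - Polynomial.C ((-1:ℚ)^n/n.factorial) := by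
    rw [h1, ← map_mul, ← map_neg]
    congr 1
    rw [Nat.factorial_succ]
    have hn : ((n:ℚ)+1) ≠ 0 := by positivity
    have hf : ((n.factorial :ℚ)) ≠ 0 := by exact_mod_cast n.factorial_ne_zero
    field_simp
    push_cast
    ring
  linear_combination ((1 + Polynomial.X : Rq)^(n+1)) * key

lemma cc_Ee : constantCoeff (R := Rq) Ee = 1 := by
  rw [← coeff_zero_eq_constantCoeff_apply, coeff_Ee]
  simp

lemma u_ne : (1 + Cy * Ee : PowerSeries Rq) ≠ 0 := by
  intro h
  have h2 := congrArg (constantCoeff (R := Rq)) h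
  rw [map_add, map_one, map_mul, constantCoeff_C, cc_Ee, mul_one, map_zero] at h2
  have h3 := congrArg (fun p => Polynomial.coeff p 1) h2
  norm_num [Polynomial.coeff_one] at h3

lemma dmul (f g : PowerSeries Rq) :
    d⁄dX Rq (f * g) = f * d⁄dX Rq g + g * d⁄dX Rq f := by
  have : d⁄dX Rq (f * g) = derivativeFun (f * g) := rfl
  rw [this, derivativeFun_mul, smul_eq_mul, smul_eq_mul]
  rfl

lemma done' : d⁄dX Rq (1 : PowerSeries Rq) = 0 := by
  have : d⁄dX Rq (1 : PowerSeries Rq) = derivativeFun 1 := rfl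
  rw [this, derivativeFun_one]

lemma dadd (f g : PowerSeries Rq) :
    d⁄dX Rq (f + g) = d⁄dX Rq f + d⁄dX Rq g := by
  have : d⁄dX Rq (f + g) = derivativeFun (f + g) := rfl
  rw [this, derivativeFun_add]
  rfl

lemma dsub (f g : PowerSeries Rq) :
    d⁄dX Rq (f - g) = d⁄dX Rq f - d⁄dX Rq g := by
  have h : f = (f - g) + g := by ring
  have h2 := dadd (f - g) g
  rw [← h] at h2
  linear_combination -h2

lemma dC (r : Rq) : d⁄dX Rq (PowerSeries.C (R := Rq) r) = 0 := derivativeFun_C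

lemma ode : d⁄dX Rq ff = (1 - ff) * (1 + Cy * ff) := by
  have hC : (C1y : PowerSeries Rq) = 1 + Cy := by rw [map_add, map_one]
  have h1 : (1 - ff) * (1 + Cy * Ee) = C1y * Ee := by
    rw [hC]; linear_combination (-1 : PowerSeries Rq) * ffstar
  have h2 : (1 + Cy * ff) * (1 + Cy * Ee) = C1y := by
    rw [hC]; linear_combination Cy * ffstar
  have hstar := congrArg (d⁄dX Rq) ffstar
  rw [dmul, dadd, done', dmul, dC, dsub, done', dEe] at hstar
  have h3 : d⁄dX Rq ff * (1 + Cy * Ee) = (1 + Cy * ff) * (C1y * Ee) := by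
    linear_combination hstar
  have h4 : d⁄dX Rq ff * ((1 + Cy * Ee) * (1 + Cy * Ee))
      = ((1 - ff) * (1 + Cy * ff)) * ((1 + Cy * Ee) * (1 + Cy * Ee)) := by
    calc d⁄dX Rq ff * ((1 + Cy * Ee) * (1 + Cy * Ee))
        = (d⁄dX Rq ff * (1 + Cy * Ee)) * (1 + Cy * Ee) := by ring
      _ = (1 + Cy * ff) * (1 + Cy * Ee) * (C1y * Ee) := by rw [h3]; ring
      _ = C1y * (C1y * Ee) := by rw [h2]
      _ = ((1 - ff) * (1 + Cy * Ee)) * ((1 + Cy * ff) * (1 + Cy * Ee)) := by rw [h1, h2]; ring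
      _ = ((1 - ff) * (1 + Cy * ff)) * ((1 + Cy * Ee) * (1 + Cy * Ee)) := by ring
  exact mul_right_cancel₀ (mul_ne_zero u_ne u_ne) h4

noncomputable def pp (m : ℕ) : Rq := ∑ i ∈ Finset.range (m+1), (-Polynomial.X)^i

lemma pp_succ (m : ℕ) : pp (m+1) = pp m + (-Polynomial.X)^(m+1) :=
  Finset.sum_range_succ _ _

lemma pp_rec (N : ℕ) : pp (N+2)
    = pp (N+1) - Polynomial.X * pp (N+1) + Polynomial.X * pp N := by
  simp only [pp_succ]
  ring

noncomputable def SS (N : ℕ) : PowerSeries Rq :=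
  ∑ m ∈ Finset.range (N+1), PowerSeries.C (R := Rq) (pp m) * ff^m

lemma truncid (N : ℕ) : (1 - ff) * (1 + Cy * ff) * SS N
    = 1 - ff^(N+1) * (PowerSeries.C (R := Rq) (pp (N+1)) + Cy * PowerSeries.C (R := Rq) (pp N) * ff) := by
  induction N with
  | zero =>
      have h0 : pp 0 = 1 := by simp [pp]
      have h1 : pp 1 = 1 - Polynomial.X := by
        simp [pp, Finset.sum_range_succ, sub_eq_add_neg]
      simp only [SS, zero_add, Finset.sum_range_one, h0, pow_zero, map_one, mul_one, h1]
      rw [map_sub, map_one]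
      ring
  | succ N ih =>
      have hS : SS (N+1) = SS N + PowerSeries.C (R := Rq) (pp (N+1)) * ff^(N+1) :=
        Finset.sum_range_succ _ _
      have hc : PowerSeries.C (R := Rq) (pp (N+2))
          = PowerSeries.C (R := Rq) (pp (N+1)) - Cy * PowerSeries.C (R := Rq) (pp (N+1))
            + Cy * PowerSeries.C (R := Rq) (pp N) := by
        rw [← map_mul, ← map_mul, ← map_sub, ← map_add, pp_rec]
      rw [hS]
      linear_combination ih + ff^(N+2) * hc

lemma dffSS (n : ℕ) : d⁄dX Rq ff * SS n
    = 1 - ff^(n+1) * (PowerSeries.C (R := Rq) (pp (n+1)) + Cy * PowerSeries.C (R := Rq) (pp n) * ff) := by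
  rw [ode]
  exact truncid n

lemma coeff_ffpow_mul (n : ℕ) (g : PowerSeries Rq) :
    PowerSeries.coeff (R := Rq) n (ff^(n+1) * g) = 0 := by
  rw [ff, mul_pow, mul_assoc, coeff_X_pow_mul']
  simp

lemma QiQ_pow (m : ℕ) : Qi^m * QQ^m = 1 := by
  rw [← mul_pow, mul_comm, QQi, one_pow]

lemma dpow (g : PowerSeries Rq) (j : ℕ) :
    d⁄dX Rq (g^(j+1)) = (j+1 : ℕ) • (g^j * d⁄dX Rq g) := by
  induction j with
  | zero => simp
  | succ k ih =>
      rw [pow_succ, dmul, ih]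
      simp only [nsmul_eq_mul]
      push_cast
      ring

lemma dQi_rel : QQ * d⁄dX Rq Qi + Qi * d⁄dX Rq QQ = 0 := by
  have h := congrArg (d⁄dX Rq) QQi
  rw [dmul, done'] at h
  linear_combination h

lemma dff_eq : d⁄dX Rq ff = Qi + X * d⁄dX Rq Qi := by
  rw [ff, dmul, derivative_X, mul_one]
  ring

lemma hQiQ : Qi * QQ = 1 := by rw [mul_comm]; exact QQi

lemma coeff_pow_diag_aux (j : ℕ) :
    PowerSeries.coeff (R := Rq) j (d⁄dX Rq QQ * QQ^j) = PowerSeries.coeff (R := Rq) (j+1) (QQ^(j+1)) := by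
  have h1 := PowerSeries.coeff_derivative (QQ^(j+1)) j
  rw [dpow, map_nsmul, nsmul_eq_mul] at h1
  have hne : ((j+1 : ℕ) : Rq) ≠ 0 := Nat.cast_ne_zero.mpr (Nat.succ_ne_zero j)
  apply mul_left_cancel₀ hne
  rw [show QQ^j * d⁄dX Rq QQ = d⁄dX Rq QQ * QQ^j from mul_comm _ _] at h1
  rw [h1]
  push_cast
  ring

lemma term_lt (m n : ℕ) (h : m < n) :
    PowerSeries.coeff (R := Rq) n (ff^m * d⁄dX Rq ff * QQ^(n+1)) = 0 := by
  obtain ⟨j, rfl⟩ : ∃ j, n = m + (j+1) := ⟨n - m - 1, by omega⟩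
  have e2 : Qi^m * QQ^m = 1 := QiQ_pow m
  have h2 : d⁄dX Rq Qi * QQ^(j+1+1) = -(d⁄dX Rq QQ * QQ^j) := by
    calc d⁄dX Rq Qi * QQ^(j+1+1) = (QQ * d⁄dX Rq Qi) * QQ^(j+1) := by
          rw [pow_succ]; ring
      _ = (-(Qi * d⁄dX Rq QQ)) * QQ^(j+1) := by
          rw [show QQ * d⁄dX Rq Qi = -(Qi * d⁄dX Rq QQ) from by linear_combination dQi_rel]
      _ = -(d⁄dX Rq QQ * QQ^j) * (Qi * QQ) := by rw [pow_succ]; ring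
      _ = -(d⁄dX Rq QQ * QQ^j) := by rw [hQiQ, mul_one]
  have key : ff^m * d⁄dX Rq ff * QQ^(m + (j+1) + 1)
      = X^m * (QQ^(j+1) - X * (d⁄dX Rq QQ * QQ^j)) := by
    rw [dff_eq, ff, mul_pow]
    linear_combination (X^m * (Qi + X * d⁄dX Rq Qi) * QQ^(j+1+1)) * e2
      + (X^m * QQ^(j+1)) * hQiQ + X^(m+1) * h2
  rw [key, show m + (j+1) = (j+1) + m from by omega, coeff_X_pow_mul, map_sub,
    coeff_succ_X_mul, coeff_pow_diag_aux, sub_self]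

lemma term_eqn (n : ℕ) :
    PowerSeries.coeff (R := Rq) n (ff^n * d⁄dX Rq ff * QQ^(n+1)) = 1 := by
  have e2 : Qi^n * QQ^n = 1 := QiQ_pow n
  have key : ff^n * d⁄dX Rq ff * QQ^(n+1)
      = X^n * (1 + X * (d⁄dX Rq Qi * QQ)) := by
    rw [dff_eq, ff, mul_pow]
    linear_combination (X^n * (Qi + X * d⁄dX Rq Qi) * QQ) * e2 + X^n * hQiQ
  have hc := coeff_X_pow_mul (1 + X * (d⁄dX Rq Qi * QQ)) n 0
  rw [zero_add] at hc
  rw [key, hc]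
  rw [map_add, coeff_zero_eq_constantCoeff, map_one, map_mul, constantCoeff_X, zero_mul, add_zero]

lemma coeff_Q_pow (n : ℕ) : PowerSeries.coeff (R := Rq) n (QQ^(n+1)) = pp n := by
  have h0 : PowerSeries.coeff (R := Rq) n (QQ^(n+1))
      = PowerSeries.coeff (R := Rq) n (d⁄dX Rq ff * SS n * QQ^(n+1)) := by
    have hx : d⁄dX Rq ff * SS n * QQ^(n+1)
        = QQ^(n+1) - ff^(n+1) * ((PowerSeries.C (R := Rq) (pp (n+1))
            + Cy * PowerSeries.C (R := Rq) (pp n) * ff) * QQ^(n+1)) := by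
      linear_combination QQ^(n+1) * dffSS n
    rw [hx, map_sub, coeff_ffpow_mul, sub_zero]
  rw [h0, SS, Finset.mul_sum, Finset.sum_mul, map_sum]
  have hterm : ∀ m ∈ Finset.range (n+1),
      PowerSeries.coeff (R := Rq) n (d⁄dX Rq ff * (PowerSeries.C (R := Rq) (pp m) * ff^m) * QQ^(n+1))
      = pp m * PowerSeries.coeff (R := Rq) n (ff^m * d⁄dX Rq ff * QQ^(n+1)) := by
    intro m _
    rw [show d⁄dX Rq ff * (PowerSeries.C (R := Rq) (pp m) * ff^m) * QQ^(n+1)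
        = PowerSeries.C (R := Rq) (pp m) * (ff^m * d⁄dX Rq ff * QQ^(n+1)) from by ring,
      PowerSeries.coeff_C_mul]
  rw [Finset.sum_congr rfl hterm, Finset.sum_eq_single n]
  · rw [term_eqn, mul_one]
  · intro b hb hbn
    rw [term_lt b n (by simp at hb; omega), mul_zero]
  · intro hn
    exact absurd (Finset.self_mem_range_succ n) hn

lemma uniq (f g : PowerSeries Rq) (hf : constantCoeff (R := Rq) f = 1) (hg : constantCoeff (R := Rq) g = 1)
    (h : ∀ n, PowerSeries.coeff (R := Rq) n (f^(n+1)) = PowerSeries.coeff (R := Rq) n (g^(n+1))) :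
    f = g := by
  ext n : 1
  induction n using Nat.strong_induction_on with
  | _ n ih =>
    have hd : ∀ k < n, PowerSeries.coeff (R := Rq) k (f - g) = 0 := fun k hk => by
      rw [map_sub, ih k hk, sub_self]
    have h1 : PowerSeries.coeff (R := Rq) n
        ((∑ i ∈ Finset.range (n+1), f^i * g^(n-i)) * (f - g)) = 0 := by
      have hgs := geom_sum₂_mul f g (n+1)
      simp only [Nat.add_sub_cancel] at hgs
      rw [hgs, map_sub, h n, sub_self]
    rw [coeff_mul, Finset.sum_eq_single (0, n)] at h1
    · have hT : PowerSeries.coeff (R := Rq) 0 (∑ i ∈ Finset.range (n+1), f^i * g^(n-i))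
          = ((n+1 : ℕ) : Rq) := by
        rw [map_sum]
        have : ∀ i ∈ Finset.range (n+1),
            PowerSeries.coeff (R := Rq) 0 (f^i * g^(n-i)) = 1 := by
          intro i _
          rw [coeff_zero_eq_constantCoeff, map_mul, map_pow, map_pow, hf, hg, one_pow,
            one_pow, one_mul]
        rw [Finset.sum_congr rfl this, Finset.sum_const, Finset.card_range, nsmul_eq_mul,
          mul_one]
      rw [hT] at h1
      have hne : ((n+1 : ℕ) : Rq) ≠ 0 := Nat.cast_ne_zero.mpr (Nat.succ_ne_zero n)
      have := (mul_eq_zero.mp h1).resolve_left hne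
      rw [map_sub] at this
      exact sub_eq_zero.mp this
    · intro b hb hbn
      rw [Finset.HasAntidiagonal.mem_antidiagonal] at hb
      have : b.2 < n := by
        rcases Nat.lt_or_ge b.2 n with h' | h'
        · exact h'
        · exfalso; apply hbn
          have : b.2 = n := by omega
          have : b.1 = 0 := by omega
          exact Prod.ext this ‹b.2 = n›
      rw [hd b.2 this, mul_zero]
    · intro hn
      exact absurd (by simp : (0, n) ∈ Finset.HasAntidiagonal.antidiagonal n) hn

/-- Uniqueness: any formal power series `f ∈ (ℚ[y])⟦x⟧` with constant coefficient `1` such that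
for every `n` the coefficient of `x^n` in `f^{n+1}` equals `Σ_{i=0}^{n} (-y)^i` is the
Hirzebruch power series `Q(y,x)`. -/
theorem hirzebruchSeries_unique (f : PowerSeries (Polynomial ℚ))
    (h1 : PowerSeries.constantCoeff (R := Polynomial ℚ) f = 1)
    (h2 : ∀ n : ℕ, PowerSeries.coeff (R := Polynomial ℚ) n (f ^ (n + 1))
      = ∑ i ∈ Finset.range (n + 1), (-Polynomial.X : Polynomial ℚ) ^ i) :
    f = hirzebruchSeries := by
  apply uniq f hirzebruchSeries h1 cc_Q
  intro n
  rw [h2 n, coeff_Q_pow n, pp]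
end
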